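/- Let G be a completely metrizable topological group. If G has a dense-in-itself set of free generators (i.e. a dense-in-itself subset S ⊆ G that freely generates a free subgroup of G), then G contains a free subgroup generated by a perfect set, i.e. there exists a perfect set P ⊆ G freely generating a free subgroup of G. -/

import Mathlib

open Set Filter Cardinal FirstOrder

universe u v

/-- A topological space is completely metrizable if its topology is induced by a complete metric. -/
def CompletelyMetrizable (Y : Type*) [t : TopologicalSpace Y] : Prop :=
  ∃ m : MetricSpace Y, m.toUniformSpace.toTopologicalSpace = t ∧ @CompleteSpace Y m.toUniformSpace

/-- The weight of a topological space: the least cardinality of a topological basis. -/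
noncomputable def topWeight (X : Type u) [TopologicalSpace X] : Cardinal.{u} :=
  ⨅ B : { B : Set (Set X) // TopologicalSpace.IsTopologicalBasis B }, Cardinal.mk B.1

/-- A set is dense-in-itself if it is nonempty and has no isolated points
(in the subspace topology). -/
def DenseInItselfSet {X : Type*} [TopologicalSpace X] (S : Set X) : Prop :=
  S.Nonempty ∧ ∀ x ∈ S, AccPt x (𝓟 S)

/-- A set is perfect if it is nonempty, completely metrizable in the subspace topology,
and has no isolated points. -/
def IsPerfectSet {X : Type*} [TopologicalSpace X] (P : Set X) : Prop :=
  P.Nonempty ∧ CompletelyMetrizable P ∧ ∀ x ∈ P, AccPt x (𝓟 P)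

/-- The `γ`-th Cantor–Bendixson derivative of a set: iterate the operation of removing
isolated points, taking intersections at limit stages. -/
noncomputable def cbDeriv {X : Type u} [TopologicalSpace X] (A : Set X) (γ : Ordinal.{v}) :
    Set X :=
  Ordinal.limitRecOn γ A (fun _ ih => { x ∈ ih | AccPt x (𝓟 ih) })
    (fun o _ ih => ⋂ (o' : Ordinal.{v}) (h : o' < o), ih o' h)

/-- `S` freely generates a free subgroup of `G`: the canonical homomorphism from the
free group on `S` to `G` is injective. -/
def FreelyGenerates {G : Type*} [Group G] (S : Set G) : Prop :=
  Function.Injective (FreeGroup.lift fun s : S => (s : G))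


section Aux


theorem my_word_decomp {α : Type*} (w : FreeGroup α) (hw : w ≠ 1) :
    ∃ (k : ℕ) (w' : FreeGroup (Fin k)) (x : Fin k → α),
      Function.Injective x ∧ FreeGroup.map x w' = w ∧ w' ≠ 1 := by
  classical
  set L := w.toWord with hL
  have hmem : ∀ p : {p // p ∈ L}, p.1.1 ∈ (L.map Prod.fst).toFinset := fun p => by
    rw [List.mem_toFinset]; exact List.mem_map_of_mem (f := Prod.fst) p.2
  set T : Finset α := (L.map Prod.fst).toFinset with hT
  set eqv := T.equivFin with heqv
  set x : Fin T.card → α := fun i => (eqv.symm i : α) with hx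
  set f : {p // p ∈ L} → Fin T.card × Bool := fun p => (eqv ⟨p.1.1, hmem p⟩, p.1.2) with hf
  set w' : FreeGroup (Fin T.card) := FreeGroup.mk (L.attach.map f) with hw'
  have hinj : Function.Injective x := fun i j hij => by
    simpa using congrArg eqv (Subtype.ext hij)
  have hmap : FreeGroup.map x w' = w := by
    rw [hw', FreeGroup.map.mk, List.map_map]
    have h1 : ((fun q : Fin T.card × Bool => (x q.1, q.2)) ∘ f)
        = fun p : {p // p ∈ L} => (p.1.1, p.1.2) := by
      funext p
      simp [hf, hx]
    rw [h1]
    rw [List.attach_map_val (l := L) (f := fun p => (p.1, p.2))]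
    simp [hL, FreeGroup.mk_toWord]
  exact ⟨T.card, w', x, hinj, hmap, fun h1 => hw (by rw [← hmap, h1, map_one])⟩

theorem my_map_injective {α β : Type*} {x : α → β} (hx : Function.Injective x) :
    Function.Injective (FreeGroup.map x) := by
  classical
  set g : β → FreeGroup α := fun b =>
    if h : ∃ a, x a = b then FreeGroup.of h.choose else 1 with hg
  have hcomp : (FreeGroup.lift g).comp (FreeGroup.map x) = MonoidHom.id (FreeGroup α) := by
    apply FreeGroup.ext_hom
    intro a
    simp only [MonoidHom.comp_apply, FreeGroup.map.of, FreeGroup.lift_apply_of, MonoidHom.id_apply]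
    rw [hg]
    beta_reduce
    have h : ∃ a', x a' = x a := ⟨a, rfl⟩
    rw [dif_pos h]
    have := h.choose_spec
    rw [hx this]
  intro u v huv
  have := congrArg (fun t => FreeGroup.lift g t) huv
  simpa [← MonoidHom.comp_apply, hcomp] using this

theorem my_free_eval {G : Type*} [Group G] {S : Set G} (hfree : FreelyGenerates S)
    {k : ℕ} {x : Fin k → G} (hxS : ∀ i, x i ∈ S) (hx : Function.Injective x)
    {w : FreeGroup (Fin k)} (hw : w ≠ 1) : FreeGroup.lift x w ≠ 1 := by
  set x' : Fin k → S := fun i => ⟨x i, hxS i⟩ with hx'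
  have hx'inj : Function.Injective x' := fun i j h => hx (congrArg Subtype.val h)
  have hcomp : (FreeGroup.lift fun s : S => (s : G)).comp (FreeGroup.map x')
      = FreeGroup.lift x := by
    apply FreeGroup.ext_hom
    intro i
    simp [hx']
  intro h1
  have h2 : FreeGroup.map x' w = 1 := by
    apply hfree
    rw [← MonoidHom.comp_apply, hcomp, h1, map_one]
  exact hw (my_map_injective hx'inj (by rw [h2, map_one]))

theorem my_eval_continuous {G : Type*} [Group G] [TopologicalSpace G] [IsTopologicalGroup G]
    {ι : Type*} (w : FreeGroup ι) :
    Continuous fun y : ι → G => FreeGroup.lift y w := by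
  refine FreeGroup.induction_on w ?_ ?_ ?_ ?_
  · simpa using continuous_const
  · intro i
    show Continuous fun y : ι → G => FreeGroup.lift y (FreeGroup.of i)
    simp only [FreeGroup.lift_apply_of]
    exact continuous_apply i
  · intro i h
    simp only [map_inv]
    exact h.inv
  · intro u v hu hv
    simp only [map_mul]
    exact hu.mul hv


def MyW : Type := Σ k : ℕ, {w : FreeGroup (Fin k) // w ≠ 1}

instance : Countable MyW := by
  have : ∀ k : ℕ, Countable (FreeGroup (Fin k)) := fun k => by
    classical
    exact (FreeGroup.toWord_injective (α := Fin k)).countable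
  unfold MyW
  infer_instance

instance : Nonempty MyW :=
  ⟨⟨1, ⟨FreeGroup.of 0, by
    intro h
    have := congrArg FreeGroup.toWord h
    simp [FreeGroup.toWord_of, FreeGroup.toWord_one] at this⟩⟩⟩

open Metric Topology in
def Good {G : Type*} [Group G] [MetricSpace G] (S : Set G) (e : ℕ → MyW)
    (n : ℕ) (c : (Fin n → Bool) → G) (r : ℝ) : Prop :=
  (∀ σ, c σ ∈ S) ∧ 0 < r ∧ r ≤ (2:ℝ)⁻¹ ^ n ∧
  (∀ σ τ : Fin n → Bool, σ ≠ τ → Disjoint (closedBall (c σ) r) (closedBall (c τ) r)) ∧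
  ∀ m < n, ∀ x : Fin (e m).1 → (Fin n → Bool), Function.Injective x →
    ∀ y : Fin (e m).1 → G, (∀ i, y i ∈ closedBall (c (x i)) r) →
      FreeGroup.lift y (e m).2.1 ≠ 1

open Metric Topology in
theorem my_step {G : Type*} [Group G] [MetricSpace G] [IsTopologicalGroup G] {S : Set G}
    (hacc : ∀ x ∈ S, AccPt x (𝓟 S)) (hfree : FreelyGenerates S) (e : ℕ → MyW)
    (n : ℕ) (c : (Fin n → Bool) → G) (r : ℝ) (hg : Good S e n c r) :
    ∃ (c' : (Fin (n+1) → Bool) → G) (r' : ℝ), Good S e (n+1) c' r' ∧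
      ∀ σ' : Fin (n+1) → Bool,
        closedBall (c' σ') r' ⊆ closedBall (c (fun i => σ' i.castSucc)) r := by
  classical
  obtain ⟨hS, hr, hrle, hdisj, hword⟩ := hg
  set par : (Fin (n+1) → Bool) → (Fin n → Bool) := fun σ' i => σ' i.castSucc with hpar
  -- eta-like: nodes determined by parent and last bit
  have hnode : ∀ σ' τ' : Fin (n+1) → Bool, par σ' = par τ' → σ' (Fin.last n) = τ' (Fin.last n)
      → σ' = τ' := by
    intro σ' τ' h1 h2
    funext i
    refine Fin.lastCases h2 (fun j => ?_) i
    exact congrFun h1 j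
  -- pick nearby fresh points
  have hpick : ∀ σ : Fin n → Bool, ∃ p : G, p ∈ S ∧ dist p (c σ) ≤ r/4 ∧ p ≠ c σ := by
    intro σ
    have := (accPt_iff_nhds (x := c σ) (C := S)).1 (hacc _ (hS σ))
    obtain ⟨y, ⟨hy1, hy2⟩, hy3⟩ := this (ball (c σ) (r/4)) (ball_mem_nhds _ (by linarith))
    exact ⟨y, hy2, le_of_lt hy1, hy3⟩
  choose p hpS hpdist hpne using hpick
  set c' : (Fin (n+1) → Bool) → G :=
    fun σ' => if σ' (Fin.last n) then p (par σ') else c (par σ') with hc'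
  have hc'S : ∀ σ', c' σ' ∈ S := by
    intro σ'
    rw [hc']
    beta_reduce
    split
    · exact hpS _
    · exact hS _
  have hc'near : ∀ σ', dist (c' σ') (c (par σ')) ≤ r/4 := by
    intro σ'
    rw [hc']
    beta_reduce
    split
    · exact hpdist _
    · simp [le_of_lt (by linarith : (0:ℝ) < r/4)]
  have hc'inj : Function.Injective c' := by
    intro σ' τ' h
    by_contra hne
    by_cases hp : par σ' = par τ'
    · have hlast : σ' (Fin.last n) ≠ τ' (Fin.last n) := fun hl => hne (hnode _ _ hp hl)
      rw [hc'] at h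
      rcases Bool.eq_false_or_eq_true (σ' (Fin.last n)) with h1 | h1 <;>
        rcases Bool.eq_false_or_eq_true (τ' (Fin.last n)) with h2 | h2 <;>
          simp [h1, h2] at h hlast
      · rw [hp] at h
        exact hpne _ h
      · rw [hp] at h
        exact hpne _ h.symm
    · have d := hdisj _ _ hp
      have m1 : c' σ' ∈ closedBall (c (par σ')) r :=
        mem_closedBall.2 (le_trans (hc'near σ') (by linarith))
      have m2 : c' τ' ∈ closedBall (c (par τ')) r :=
        mem_closedBall.2 (le_trans (hc'near τ') (by linarith))
      exact (Set.disjoint_left.1 d m1) (h ▸ m2)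
  -- centers satisfy all word conditions
  have hcenter : ∀ m < n + 1, ∀ x : Fin (e m).1 → (Fin (n+1) → Bool), Function.Injective x →
      FreeGroup.lift (fun i => c' (x i)) (e m).2.1 ≠ 1 := by
    intro m _ x hx
    exact my_free_eval hfree (fun i => hc'S (x i)) (hc'inj.comp hx) (e m).2.2
  -- open set of good configurations
  set V : Set ((Fin (n+1) → Bool) → G) :=
    ⋂ m ∈ Finset.range (n+1), ⋂ x : Fin (e m).1 → (Fin (n+1) → Bool),
      ⋂ (_ : Function.Injective x),
        {y | FreeGroup.lift (fun i => y (x i)) (e m).2.1 ≠ 1} with hV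
  have hVopen : IsOpen V := by
    refine isOpen_biInter_finset fun m _ => ?_
    refine isOpen_iInter_of_finite fun x => ?_
    refine isOpen_iInter_of_finite fun hx => ?_
    have hcont : Continuous fun y : (Fin (n+1) → Bool) → G =>
        FreeGroup.lift (fun i => y (x i)) (e m).2.1 :=
      (my_eval_continuous (e m).2.1).comp (continuous_pi fun i => continuous_apply (x i))
    exact (isOpen_compl_singleton (x := (1:G))).preimage hcont
  have hc'V : c' ∈ V := by
    rw [hV]
    simp only [Set.mem_iInter, Finset.mem_range, Set.mem_setOf_eq]
    intro m hm x hx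
    exact hcenter m hm x hx
  obtain ⟨ε, hε, hball⟩ := Metric.isOpen_iff.1 hVopen c' hc'V
  -- minimal distance between distinct centers
  have htwo : ∃ σ' τ' : Fin (n+1) → Bool, σ' ≠ τ' :=
    ⟨fun _ => false, fun _ => true, fun h => by simpa using congrFun h (Fin.last n)⟩
  set D : Finset ℝ := (Finset.univ.filter
      (fun pr : (Fin (n+1) → Bool) × (Fin (n+1) → Bool) => pr.1 ≠ pr.2)).image
      (fun pr => dist (c' pr.1) (c' pr.2)) with hD
  have hDne : D.Nonempty := by
    obtain ⟨σ', τ', hst⟩ := htwo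
    exact ⟨_, Finset.mem_image.2 ⟨(σ', τ'), Finset.mem_filter.2 ⟨Finset.mem_univ _, hst⟩, rfl⟩⟩
  set δ := D.min' hDne with hδdef
  have hδpos : 0 < δ := by
    rw [hδdef]
    rw [Finset.lt_min'_iff]
    intro y hy
    obtain ⟨pr, hpr, rfl⟩ := Finset.mem_image.1 hy
    have := (Finset.mem_filter.1 hpr).2
    exact dist_pos.2 fun hc => this (hc'inj hc)
  have hδle : ∀ σ' τ' : Fin (n+1) → Bool, σ' ≠ τ' → δ ≤ dist (c' σ') (c' τ') := by
    intro σ' τ' hst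
    exact D.min'_le _ (Finset.mem_image.2 ⟨(σ', τ'),
      Finset.mem_filter.2 ⟨Finset.mem_univ _, hst⟩, rfl⟩)
  -- choose the new radius
  set r' : ℝ := min (min ((2:ℝ)⁻¹ ^ (n+1)) (r/2)) (min (δ/3) (ε/2)) with hr'def
  have hr'pos : 0 < r' := by
    apply lt_min (lt_min (by positivity) (by linarith))
    exact lt_min (by linarith) (by linarith)
  have hr'le1 : r' ≤ (2:ℝ)⁻¹ ^ (n+1) := le_trans (min_le_left _ _) (min_le_left _ _)
  have hr'le2 : r' ≤ r/2 := le_trans (min_le_left _ _) (min_le_right _ _)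
  have hr'le3 : r' ≤ δ/3 := le_trans (min_le_right _ _) (min_le_left _ _)
  have hr'le4 : r' ≤ ε/2 := le_trans (min_le_right _ _) (min_le_right _ _)
  refine ⟨c', r', ⟨hc'S, hr'pos, hr'le1, ?_, ?_⟩, ?_⟩
  · -- disjointness
    intro σ' τ' hst
    apply closedBall_disjoint_closedBall
    calc r' + r' ≤ δ/3 + δ/3 := by linarith
      _ < δ := by linarith
      _ ≤ dist (c' σ') (c' τ') := hδle _ _ hst
  · -- word conditions
    intro m hm x hx y hy
    set ytil : (Fin (n+1) → Bool) → G :=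
      fun σ' => if h : ∃ i, x i = σ' then y h.choose else c' σ' with hytil
    have hyx : ∀ i, ytil (x i) = y i := by
      intro i
      rw [hytil]
      beta_reduce
      have h : ∃ i', x i' = x i := ⟨i, rfl⟩
      rw [dif_pos h]
      congr 1
      exact hx h.choose_spec
    have hdist : dist ytil c' < ε := by
      rw [dist_pi_lt_iff hε]
      intro σ'
      rw [hytil]
      beta_reduce
      split
      · next h =>
        calc dist (y h.choose) (c' σ') ≤ r' := by
              have := hy h.choose
              rw [h.choose_spec] at this
              exact mem_closedBall.1 this
          _ < ε := by linarith
      · simpa using by linarith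
    have hmem : ytil ∈ V := hball (mem_ball.2 hdist)
    rw [hV] at hmem
    simp only [Set.mem_iInter, Finset.mem_range, Set.mem_setOf_eq] at hmem
    have := hmem m hm x hx
    have heq : (fun i => ytil (x i)) = y := funext hyx
    rwa [heq] at this
  · -- nesting
    intro σ' z hz
    rw [mem_closedBall] at hz ⊢
    calc dist z (c (fun i => σ' i.castSucc))
        ≤ dist z (c' σ') + dist (c' σ') (c (par σ')) := dist_triangle _ _ _
      _ ≤ r' + r/4 := add_le_add hz (hc'near σ')
      _ ≤ r := by linarith

open Metric Topology in
theorem my_main {G : Type*} [Group G] [MetricSpace G] [IsTopologicalGroup G] [CompleteSpace G]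
    {S : Set G} (hne : S.Nonempty) (hacc : ∀ x ∈ S, AccPt x (𝓟 S))
    (hfree : FreelyGenerates S) :
    ∃ P : Set G, IsPerfectSet P ∧ FreelyGenerates P := by
  classical
  obtain ⟨e, he⟩ := exists_surjective_nat MyW
  obtain ⟨s₀, hs₀⟩ := hne
  -- stage type
  set Stage : ℕ → Type _ := fun n => {pr : ((Fin n → Bool) → G) × ℝ // Good S e n pr.1 pr.2}
    with hStage
  have st0 : Stage 0 := ⟨⟨fun _ => s₀, 1⟩, fun _ => hs₀, one_pos, by norm_num,
    fun σ τ hστ => absurd (Subsingleton.elim σ τ) hστ,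
    fun m hm => absurd hm (Nat.not_lt_zero m)⟩
  have hnext : ∀ n (st : Stage n), ∃ st' : Stage (n+1),
      ∀ σ' : Fin (n+1) → Bool,
        closedBall (st'.1.1 σ') st'.1.2 ⊆ closedBall (st.1.1 (fun i => σ' i.castSucc)) st.1.2 := by
    intro n st
    obtain ⟨c', r', hg', hstep⟩ := my_step hacc hfree e n st.1.1 st.1.2 st.2
    exact ⟨⟨⟨c', r'⟩, hg'⟩, hstep⟩
  choose next hnextspec using hnext
  obtain ⟨F, hF⟩ : ∃ F : ∀ n, Stage n, ∀ n, ∀ σ' : Fin (n+1) → Bool,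
      closedBall ((F (n+1)).1.1 σ') ((F (n+1)).1.2) ⊆
        closedBall ((F n).1.1 (fun i => σ' i.castSucc)) ((F n).1.2) := by
    refine ⟨fun n => Nat.rec st0 next n, fun n => ?_⟩
    exact hnextspec n (Nat.rec st0 next n)
  set c : ∀ n, (Fin n → Bool) → G := fun n => (F n).1.1 with hc
  set r : ℕ → ℝ := fun n => (F n).1.2 with hr
  have hgood : ∀ n, Good S e n (c n) (r n) := fun n => (F n).2
  have hrpos : ∀ n, 0 < r n := fun n => (hgood n).2.1
  have hrle : ∀ n, r n ≤ (2:ℝ)⁻¹ ^ n := fun n => (hgood n).2.2.1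
  set node : ∀ n, (ℕ → Bool) → (Fin n → Bool) := fun n b i => b i with hnode
  have hnodecast : ∀ n (b : ℕ → Bool), (fun i : Fin n => node (n+1) b i.castSucc) = node n b := by
    intro n b
    funext i
    simp [hnode]
  have hsub : ∀ (b : ℕ → Bool) (n₁ n₂ : ℕ), n₁ ≤ n₂ →
      closedBall (c n₂ (node n₂ b)) (r n₂) ⊆ closedBall (c n₁ (node n₁ b)) (r n₁) := by
    intro b n₁ n₂ h
    induction n₂, h using Nat.le_induction with
    | base => exact subset_rfl
    | succ n hn ih =>
      refine subset_trans ?_ ih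
      have := hF n (node (n+1) b)
      rwa [hnodecast n b] at this
  have hmemself : ∀ (b : ℕ → Bool) n, c n (node n b) ∈ closedBall (c n (node n b)) (r n) :=
    fun b n => mem_closedBall_self (le_of_lt (hrpos n))
  have hmem2 : ∀ (b : ℕ → Bool) (n m : ℕ), n ≤ m →
      c m (node m b) ∈ closedBall (c n (node n b)) (r n) :=
    fun b n m h => hsub b n m h (hmemself b m)
  -- Cauchy and limit
  have hΦ : ∀ b : ℕ → Bool, ∃ x, Tendsto (fun n => c n (node n b)) atTop (𝓝 x) := by
    intro b
    apply cauchySeq_tendsto_of_complete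
    apply cauchySeq_of_le_geometric 2⁻¹ 1 (by norm_num)
    intro n
    have := hmem2 b n (n+1) (Nat.le_succ n)
    rw [mem_closedBall] at this
    calc dist (c n (node n b)) (c (n+1) (node (n+1) b)) = dist (c (n+1) (node (n+1) b)) (c n (node n b)) := dist_comm _ _
      _ ≤ r n := this
      _ ≤ (2:ℝ)⁻¹ ^ n := hrle n
      _ = 1 * (2:ℝ)⁻¹ ^ n := (one_mul _).symm
  choose Φ hΦt using hΦ
  have hΦmem : ∀ (b : ℕ → Bool) n, Φ b ∈ closedBall (c n (node n b)) (r n) := by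
    intro b n
    refine isClosed_closedBall.mem_of_tendsto (hΦt b) ?_
    exact eventually_atTop.2 ⟨n, fun m hm => hmem2 b n m hm⟩
  -- addresses separate points
  have haddr : ∀ (a b : ℕ → Bool) (n : ℕ), node n a ≠ node n b → Φ a ≠ Φ b := by
    intro a b n h heq
    have d := (hgood n).2.2.2.1 (node n a) (node n b) h
    exact (Set.disjoint_left.1 d (hΦmem a n)) (heq ▸ hΦmem b n)
  have hΦinj : Function.Injective Φ := by
    intro a b heq
    by_contra hab
    obtain ⟨j, hj⟩ : ∃ j, a j ≠ b j := by
      by_contra hco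
      push_neg at hco
      exact hab (funext hco)
    exact haddr a b (j+1) (fun h => hj (congrFun h ⟨j, Nat.lt_succ_self j⟩)) heq
  have hclose : ∀ (a b : ℕ → Bool) (n : ℕ), node n a = node n b →
      dist (Φ a) (Φ b) ≤ 2 * r n := by
    intro a b n h
    have h1 := mem_closedBall.1 (hΦmem a n)
    have h2 := mem_closedBall.1 (hΦmem b n)
    rw [h] at h1
    calc dist (Φ a) (Φ b) ≤ dist (Φ a) (c n (node n b)) + dist (c n (node n b)) (Φ b) :=
          dist_triangle _ _ _
      _ ≤ r n + r n := add_le_add h1 (by rwa [dist_comm])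
      _ = 2 * r n := by ring
  have hcyl : ∀ (a : ℕ → Bool) (n : ℕ), {b : ℕ → Bool | node n b = node n a} ∈ 𝓝 a := by
    intro a n
    have : {b : ℕ → Bool | node n b = node n a} = ⋂ i : Fin n, {b : ℕ → Bool | b i = a i} := by
      ext b
      simp only [Set.mem_setOf_eq, Set.mem_iInter, hnode]
      constructor
      · intro h i
        exact congrFun h i
      · intro h
        funext i
        exact h i
    rw [this]
    refine (isOpen_iInter_of_finite fun i : Fin n => ?_).mem_nhds ?_
    · have : {b : ℕ → Bool | b (i : ℕ) = a (i : ℕ)} =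
          (fun b : ℕ → Bool => b (i : ℕ)) ⁻¹' {a (i : ℕ)} := rfl
      rw [this]
      exact (isOpen_discrete _).preimage (continuous_apply _)
    · simp
  have hΦcont : Continuous Φ := by
    rw [continuous_iff_continuousAt]
    intro a
    rw [ContinuousAt, Metric.tendsto_nhds]
    intro ε hε
    obtain ⟨n, hn⟩ := exists_pow_lt_of_lt_one (by linarith : (0:ℝ) < ε/4) (by norm_num : (2:ℝ)⁻¹ < 1)
    refine Filter.eventually_of_mem (hcyl a n) fun b hb => ?_
    calc dist (Φ b) (Φ a) ≤ 2 * r n := hclose b a n hb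
      _ ≤ 2 * (2:ℝ)⁻¹ ^ n := by linarith [hrle n]
      _ < ε := by linarith
  set P : Set G := Set.range Φ with hP
  have hPcompact : IsCompact P := isCompact_range hΦcont
  have hPclosed : IsClosed P := hPcompact.isClosed
  refine ⟨P, ⟨range_nonempty Φ, ?_, ?_⟩, ?_⟩
  · -- completely metrizable
    refine ⟨inferInstance, rfl, ?_⟩
    exact hPclosed.completeSpace_coe
  · -- no isolated points
    rintro x ⟨a, rfl⟩
    rw [accPt_iff_nhds]
    intro U hU
    obtain ⟨ε, hε, hball⟩ := Metric.mem_nhds_iff.1 hU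
    obtain ⟨n, hn⟩ := exists_pow_lt_of_lt_one (by linarith : (0:ℝ) < ε/4) (by norm_num : (2:ℝ)⁻¹ < 1)
    set b : ℕ → Bool := Function.update a n (!(a n)) with hb
    have hba : b ≠ a := by
      intro h
      have := congrFun h n
      rw [hb] at this
      simp at this
    have hnodeq : node n b = node n a := by
      funext i
      rw [hb, hnode]
      exact Function.update_of_ne (Nat.ne_of_lt i.2) _ a
    refine ⟨Φ b, ⟨hball ?_, ⟨b, rfl⟩⟩, fun h => hba (hΦinj h)⟩
    rw [mem_ball]
    calc dist (Φ b) (Φ a) ≤ 2 * r n := hclose b a n hnodeq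
      _ ≤ 2 * (2:ℝ)⁻¹ ^ n := by linarith [hrle n]
      _ < ε := by linarith
  · -- freely generates
    rw [FreelyGenerates]
    rw [injective_iff_map_eq_one]
    intro w hw1
    by_contra hw
    obtain ⟨k, w', xP, hxPinj, hmap, hw'⟩ := my_word_decomp w hw
    -- branches
    have hxPmem : ∀ i, (xP i : G) ∈ P := fun i => (xP i).2
    choose a ha using fun i => hxPmem i
    have hainj : Function.Injective a := by
      intro i j hij
      apply hxPinj
      apply Subtype.ext
      rw [← ha i, ← ha j, hij]
    obtain ⟨m, hm⟩ := he ⟨k, ⟨w', hw'⟩⟩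
    -- separation level
    have hsep : ∀ i j : Fin k, i ≠ j → ∃ d, a i d ≠ a j d := by
      intro i j hij
      by_contra hco
      push_neg at hco
      exact hij (hainj (funext hco))
    set g : Fin k × Fin k → ℕ := fun pr =>
      if h : ∃ d, a pr.1 d ≠ a pr.2 d then h.choose + 1 else 0 with hg
    set N : ℕ := max (m+1) (Finset.univ.sup g) with hN
    have hmN : m < N := lt_of_lt_of_le (Nat.lt_succ_self m) (le_max_left _ _)
    have hsepN : ∀ i j : Fin k, i ≠ j → node N (a i) ≠ node N (a j) := by
      intro i j hij hcontra
      have hex : ∃ d, a i d ≠ a j d := hsep i j hij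
      have hgle : g (i, j) ≤ N := le_trans (Finset.le_sup (Finset.mem_univ (i, j))) (le_max_right _ _)
      have hgval : g (i, j) = hex.choose + 1 := by rw [hg]; exact dif_pos hex
      have hd : hex.choose < N := by omega
      have := congrFun hcontra ⟨hex.choose, hd⟩
      exact hex.choose_spec (by simpa [hnode] using this)
    -- apply the word condition at level N
    have hcond := (hgood N).2.2.2.2 m hmN
    rw [hm] at hcond
    have hfin : FreeGroup.lift (fun i => (xP i : G)) w' ≠ 1 := by
      refine hcond (fun i => node N (a i)) (fun i j hij => ?_) (fun i => (xP i : G)) (fun i => ?_)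
      · by_contra hne
        exact hsepN i j hne hij
      · beta_reduce
        rw [← ha i]
        exact hΦmem (a i) N
    apply hfin
    have hcomp : (FreeGroup.lift fun s : P => (s : G)).comp (FreeGroup.map xP)
        = FreeGroup.lift (fun i => (xP i : G)) := by
      apply FreeGroup.ext_hom
      intro i
      simp
    rw [← hcomp, MonoidHom.comp_apply, hmap, hw1]


end Aux

theorem statement6 {G : Type u} [Group G] [TopologicalSpace G] [IsTopologicalGroup G]
    (hG : CompletelyMetrizable G)
    (h : ∃ S : Set G, DenseInItselfSet S ∧ FreelyGenerates S) :
    ∃ P : Set G, IsPerfectSet P ∧ FreelyGenerates P := by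
  obtain ⟨S, ⟨hSne, hSacc⟩, hSfree⟩ := h
  obtain ⟨m, rfl, hc⟩ := hG
  letI : MetricSpace G := m
  letI : CompleteSpace G := hc
  exact my_main hSne hSacc hSfree
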